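/- Let x > y ≥ 2 be integers with x ≤ 4y. Let T'₀ be a tree with a vertex w such that the collection {C_1, …, C_p} of all w-components of T'₀ is (x,y)-critical and |C_1| ≤ … ≤ |C_p|, and let w_1 be the unique neighbour of w in C_1. Then there exist a vertex w' ∈ C_1 and a (possibly empty) collection {C'_1, …, C'_{p'}} of w'-components of the induced forest of T'₀ on C_1 such that w_1 ∉ C' (where C' = C'_1 ∪ … ∪ C'_{p'}), and at least one of the following holds: (a) x ≤ |V(T'₀)| − |C'| − 1 ≤ x + y − 2; or (b) x ≤ |C_2 ∪ … ∪ C_p| + 2 + |C'| ≤ x + y − 2. -/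

import Mathlib

/-- `C` is a `w`-component of the forest `T` restricted to the vertex set `S`:
`C` is the vertex set of a connected component of the graph induced by `T` on `S \ {w}`. -/
def DelComp {V : Type*} (T : SimpleGraph V) (S : Set V) (w : V) (C : Set V) : Prop :=
  ∃ c : (T.induce (S \ {w})).ConnectedComponent, C = Subtype.val '' c.supp


section
open SimpleGraph

namespace St13

variable {V : Type*}

/-- Reachability within a vertex set `S`. -/
def Reach (T : SimpleGraph V) (S : Set V) (u v : V) : Prop :=
  Relation.ReflTransGen (fun a b => a ∈ S ∧ b ∈ S ∧ T.Adj a b) u v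

lemma Reach.refl {T : SimpleGraph V} {S : Set V} {u : V} : Reach T S u u :=
  Relation.ReflTransGen.refl

lemma Reach.mono {T : SimpleGraph V} {S S' : Set V} (h : S ⊆ S') {u v : V}
    (hr : Reach T S u v) : Reach T S' u v :=
  Relation.ReflTransGen.mono (fun _ _ hab => ⟨h hab.1, h hab.2.1, hab.2.2⟩) _ _ hr

lemma Reach.symm {T : SimpleGraph V} {S : Set V} {u v : V}
    (hr : Reach T S u v) : Reach T S v u :=
  haveI : Std.Symm (fun a b : V => a ∈ S ∧ b ∈ S ∧ T.Adj a b) :=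
    ⟨fun _ _ hab => ⟨hab.2.1, hab.1, hab.2.2.symm⟩⟩
  @Std.Symm.symm _ (Relation.ReflTransGen fun a b => a ∈ S ∧ b ∈ S ∧ T.Adj a b)
    Relation.ReflTransGen.stdSymm _ _ hr

lemma Reach.trans {T : SimpleGraph V} {S : Set V} {u v z : V}
    (h1 : Reach T S u v) (h2 : Reach T S v z) : Reach T S u z :=
  Relation.ReflTransGen.trans h1 h2

lemma Reach.mem' {T : SimpleGraph V} {S : Set V} {u v : V}
    (hr : Reach T S u v) : u = v ∨ (u ∈ S ∧ v ∈ S) := by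
  induction hr with
  | refl => exact Or.inl rfl
  | tail hab hbc ih =>
      rcases ih with rfl | ⟨h1, _⟩
      · exact Or.inr ⟨hbc.1, hbc.2.1⟩
      · exact Or.inr ⟨h1, hbc.2.1⟩

lemma Reach.restrict {T : SimpleGraph V} {S : Set V} {u v : V}
    (hr : Reach T S u v) : Reach T {z | z ∈ S ∧ Reach T S z v} u v := by
  induction hr using Relation.ReflTransGen.head_induction_on with
  | refl => exact Reach.refl
  | head hab h ih =>
      rename_i a c
      exact Relation.ReflTransGen.head
        ⟨⟨hab.1, Relation.ReflTransGen.head hab h⟩, ⟨hab.2.1, h⟩, hab.2.2⟩ ih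

lemma reach_of_walk {T : SimpleGraph V} {S : Set V} {a b : ↥S}
    (w : (T.induce S).Walk a b) : Reach T S ↑a ↑b := by
  induction w with
  | nil => exact Reach.refl
  | cons h p ih =>
      exact Relation.ReflTransGen.head ⟨Subtype.mem _, Subtype.mem _, h⟩ ih

lemma reach_of_reachable {T : SimpleGraph V} {S : Set V} {a b : ↥S}
    (h : (T.induce S).Reachable a b) : Reach T S ↑a ↑b :=
  h.elim fun w => reach_of_walk w

lemma reachable_of_reach {T : SimpleGraph V} {S : Set V} {u v : V}
    (h : Reach T S u v) :
    ∀ (hu : u ∈ S) (hv : v ∈ S), (T.induce S).Reachable ⟨u, hu⟩ ⟨v, hv⟩ := by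
  induction h with
  | refl => intro hu hv; exact Reachable.refl _
  | tail hab hbc ih =>
      intro hu hv
      exact (ih hu hbc.1).trans (SimpleGraph.Adj.reachable (by exact hbc.2.2))

lemma delComp_subset {T : SimpleGraph V} {C0 : Set V} {v : V} {D : Set V}
    (h : DelComp T C0 v D) : D ⊆ C0 \ {v} := by
  obtain ⟨c, rfl⟩ := h
  rintro u ⟨a, _, rfl⟩
  exact a.2

lemma delComp_mem {T : SimpleGraph V} {C0 : Set V} {v : V} {u : V}
    (hu : u ∈ C0 \ {v}) : ∃ D, DelComp T C0 v D ∧ u ∈ D := by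
  refine ⟨Subtype.val '' ((T.induce (C0 \ {v})).connectedComponentMk ⟨u, hu⟩).supp,
    ⟨_, rfl⟩, ⟨⟨u, hu⟩, ?_, rfl⟩⟩
  simp [SimpleGraph.ConnectedComponent.mem_supp_iff]

lemma delComp_eq {T : SimpleGraph V} {C0 : Set V} {v : V} {D : Set V} {k : V}
    (h : DelComp T C0 v D) (hk : k ∈ D) :
    D = {u | u ∈ C0 \ {v} ∧ Reach T (C0 \ {v}) u k} := by
  obtain ⟨c, rfl⟩ := h
  obtain ⟨a, ha, rfl⟩ := hk
  ext u
  constructor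
  · rintro ⟨b, hb, rfl⟩
    refine ⟨b.2, ?_⟩
    rw [SimpleGraph.ConnectedComponent.mem_supp_iff] at ha hb
    have : (T.induce (C0 \ {v})).Reachable b a := by
      rw [← SimpleGraph.ConnectedComponent.eq, ha, hb]
    exact reach_of_reachable this
  · rintro ⟨hu, hr⟩
    refine ⟨⟨u, hu⟩, ?_, rfl⟩
    rw [SimpleGraph.ConnectedComponent.mem_supp_iff] at ha ⊢
    rw [← ha, SimpleGraph.ConnectedComponent.eq]
    exact reachable_of_reach hr hu a.2

lemma delComp_disjoint {T : SimpleGraph V} {C0 : Set V} {v : V} {D D' : Set V}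
    (h : DelComp T C0 v D) (h' : DelComp T C0 v D') (hne : D ≠ D') :
    Disjoint D D' := by
  obtain ⟨c, rfl⟩ := h
  obtain ⟨c', rfl⟩ := h'
  rw [Set.disjoint_left]
  rintro u ⟨a, ha, rfl⟩ ⟨b, hb, hab⟩
  apply hne
  rw [SimpleGraph.ConnectedComponent.mem_supp_iff] at ha hb
  have : a = b := Subtype.ext hab.symm
  rw [this, hb] at ha
  rw [ha]

end St13

namespace St13

variable {V : Type*}

lemma sumcard [Fintype V] (s : Finset (Set V))
    (h : ∀ D ∈ s, ∀ D' ∈ s, D ≠ D' → Disjoint D D') :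
    (⋃ D ∈ s, D).ncard = ∑ D ∈ s, D.ncard := by
  classical
  induction s using Finset.induction_on with
  | empty => simp
  | insert D s hDs ih =>
      rw [Finset.sum_insert hDs, Finset.set_biUnion_insert]
      rw [Set.ncard_union_eq ?_ (Set.toFinite _) (Set.toFinite _)]
      · rw [ih (fun a ha b hb hab => h a (Finset.mem_insert_of_mem ha)
          b (Finset.mem_insert_of_mem hb) hab)]
      · rw [Set.disjoint_iUnion_right]
        intro D'
        rw [Set.disjoint_iUnion_right]
        intro hD'
        exact h D (Finset.mem_insert_self _ _) D' (Finset.mem_insert_of_mem hD')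
          (fun hEq => hDs (hEq ▸ hD'))

lemma greedy [Fintype V] (m : ℕ) (s : Finset (Set V))
    (hle : ∀ D ∈ s, D.ncard ≤ m) (hsum : m ≤ ∑ D ∈ s, D.ncard) :
    ∃ t ⊆ s, m ≤ ∑ D ∈ t, D.ncard ∧ ∑ D ∈ t, D.ncard ≤ 2 * m - 1 := by
  classical
  induction s using Finset.strongInduction with
  | _ s ih =>
    by_cases hc : ∑ D ∈ s, D.ncard ≤ 2 * m - 1
    · exact ⟨s, subset_rfl, hsum, hc⟩
    · have hne : s.Nonempty := by
        rcases Finset.eq_empty_or_nonempty s with rfl | h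
        · simp at hc
        · exact h
      obtain ⟨D, hD⟩ := hne
      have hsub : s.erase D ⊂ s := Finset.erase_ssubset hD
      have heq : ∑ E ∈ s.erase D, E.ncard + D.ncard = ∑ E ∈ s, E.ncard :=
        Finset.sum_erase_add s _ hD
      have hDle : D.ncard ≤ m := hle D hD
      obtain ⟨t, hts, h1, h2⟩ := ih (s.erase D) hsub
        (fun E hE => hle E (Finset.mem_of_mem_erase hE)) (by omega)
      exact ⟨t, hts.trans (Finset.erase_subset _ _), h1, h2⟩

end St13

namespace St13

variable {V : Type*}

lemma nbr {T : SimpleGraph V} {C0 : Set V}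
    (hconn : ∀ u ∈ C0, ∀ u' ∈ C0, Reach T C0 u u')
    {v u : V} (hv : v ∈ C0) (hu : u ∈ C0) (hne : u ≠ v) :
    ∃ c, T.Adj v c ∧ c ∈ C0 ∧ c ≠ v ∧ Reach T (C0 \ {v}) c u := by
  have main : ∀ a, Reach T C0 a v → a ≠ v →
      ∃ c, T.Adj v c ∧ c ∈ C0 ∧ c ≠ v ∧ Reach T (C0 \ {v}) c a := by
    intro a h
    induction h using Relation.ReflTransGen.head_induction_on with
    | refl => exact fun h => absurd rfl h
    | head hab h ih =>
        rename_i a' b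
        intro hav
        by_cases hbv : b = v
        · subst hbv
          exact ⟨a', hab.2.2.symm, hab.1, hav, Reach.refl⟩
        · obtain ⟨c, h1, h2, h3, h4⟩ := ih hbv
          exact ⟨c, h1, h2, h3,
            h4.tail ⟨⟨hab.2.1, hbv⟩, ⟨hab.1, hav⟩, hab.2.2.symm⟩⟩
  exact main u (hconn u hu v hv) hne

lemma cross {T : SimpleGraph V} {C0 : Set V} {v c w1 : V} {K : Set V}
    (hKcl : ∀ {a b : V}, a ∈ K → b ∈ C0 \ {v} → T.Adj a b → b ∈ K)
    (hw1K : w1 ∉ K) {u : V} (hu : u ∈ K)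
    (hr : Reach T (C0 \ {c}) u w1) :
    ∃ z, z ∈ K ∧ z ≠ c ∧ T.Adj v z := by
  have main : ∀ a, Reach T (C0 \ {c}) a w1 → a ∈ K →
      ∃ z, z ∈ K ∧ z ≠ c ∧ T.Adj v z := by
    intro a h
    induction h using Relation.ReflTransGen.head_induction_on with
    | refl => exact fun h => absurd h hw1K
    | head hab h ih =>
        rename_i a' b
        intro haK
        by_cases hbK : b ∈ K
        · exact ih hbK
        · by_cases hbv : b = v
          · refine ⟨a', haK, ?_, (hbv ▸ hab.2.2).symm⟩
            have := hab.1.2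
            simpa using this
          · exact absurd (hKcl haK ⟨hab.2.1.1, hbv⟩ hab.2.2) hbK
  exact main u hr hu

lemma two_nbr {T : SimpleGraph V} (hT : T.IsAcyclic) {S : Set V} {v z c : V}
    (hvz : T.Adj v z) (hvc : T.Adj v c) (hzc : z ≠ c) (hvS : v ∉ S)
    (hzS : z ∈ S) (hcS : c ∈ S) (hr : Reach T S z c) : False := by
  classical
  obtain ⟨w0⟩ := reachable_of_reach hr hzS hcS
  let wt : T.Walk z c := w0.map (SimpleGraph.Embedding.induce S).toHom
  have hsupp : ∀ x ∈ wt.support, x ∈ S := by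
    intro x hx
    have hx' : x ∈ (w0.map (SimpleGraph.Embedding.induce S).toHom).support := hx
    rw [SimpleGraph.Walk.support_map] at hx'
    obtain ⟨a, _, rfl⟩ := List.mem_map.mp hx'
    exact a.2
  have hP := wt.bypass_isPath
  have hPs : ∀ x ∈ wt.bypass.support, x ∈ S :=
    fun x hx => hsupp x (wt.support_bypass_subset hx)
  have hvP : v ∉ wt.bypass.support := fun h => hvS (hPs v h)
  let P2 : T.Path v c := ⟨SimpleGraph.Walk.cons hvz wt.bypass, by
    rw [SimpleGraph.Walk.cons_isPath_iff]; exact ⟨hP, hvP⟩⟩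
  let P1 : T.Path v c := SimpleGraph.Path.singleton hvc
  have hPeq : P1 = P2 := hT.path_unique P1 P2
  have hzsup : z ∈ (P1 : T.Walk v c).support := by
    rw [hPeq]
    show z ∈ (SimpleGraph.Walk.cons hvz wt.bypass).support
    rw [SimpleGraph.Walk.support_cons]
    exact List.mem_cons_of_mem _ wt.bypass.start_mem_support
  have : z = v ∨ z = c := by
    simpa [P1, SimpleGraph.Path.singleton] using hzsup
  rcases this with h | h
  · exact hvz.ne' h
  · exact hzc h

end St13

namespace St13

variable {V : Type*}

/-- Union of the components of `C0 \ {v}` not containing (nor reaching) `w1`. -/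
def WSet (T : SimpleGraph V) (C0 : Set V) (w1 v : V) : Set V :=
  {u | u ∈ C0 ∧ u ≠ v ∧ ¬ Reach T (C0 \ {v}) u w1}

lemma delComp_subset_WSet {T : SimpleGraph V} {C0 : Set V} {w1 v : V} {D : Set V}
    (hD : DelComp T C0 v D) (hw1D : w1 ∉ D) : D ⊆ WSet T C0 w1 v := by
  intro u hu
  have hsub := delComp_subset hD hu
  refine ⟨hsub.1, by simpa using hsub.2, ?_⟩
  intro hr
  rcases hr.mem' with rfl | ⟨_, hw1m⟩
  · exact hw1D hu
  · apply hw1D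
    rw [delComp_eq hD hu]
    exact ⟨hw1m, hr.symm⟩

lemma key [Fintype V] {T : SimpleGraph V} (hT : T.IsAcyclic) {C0 : Set V}
    (hconn : ∀ u ∈ C0, ∀ u' ∈ C0, Reach T C0 u u')
    {w1 : V} (hw1 : w1 ∈ C0) {m : ℕ} {v : V} (hv : v ∈ C0)
    (hmin : ∀ u ∈ C0, m ≤ (WSet T C0 w1 u).ncard →
      (WSet T C0 w1 v).ncard ≤ (WSet T C0 w1 u).ncard)
    {D : Set V} (hD : DelComp T C0 v D) (hw1D : w1 ∉ D) : D.ncard ≤ m := by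
  by_contra hcon
  push_neg at hcon
  have hDne : D.Nonempty := by
    rcases D.eq_empty_or_nonempty with rfl | h
    · simp at hcon
    · exact h
  obtain ⟨k₀, hk₀⟩ := hDne
  have hDK := delComp_eq hD hk₀
  have hk₀' := delComp_subset hD hk₀
  obtain ⟨c, hvc, hcC0, hcv, hcr⟩ := nbr hconn hv hk₀'.1 (by simpa using hk₀'.2)
  have hcD : c ∈ D := by
    rw [hDK]; exact ⟨⟨hcC0, by simpa using hcv⟩, hcr⟩
  have hreach_to_D : ∀ {z u' : V}, z ∈ D → Reach T (C0 \ {v}) z u' → u' ∈ D := by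
    intro z u' hz hr
    rcases hr.mem' with rfl | ⟨_, hu'⟩
    · exact hz
    · rw [hDK] at hz ⊢
      exact ⟨hu', Reach.trans hr.symm hz.2⟩
  have hKcl : ∀ {a b : V}, a ∈ D → b ∈ C0 \ {v} → T.Adj a b → b ∈ D := by
    intro a b ha hb hab
    rw [hDK] at ha ⊢
    exact ⟨hb, Relation.ReflTransGen.head ⟨hb, ha.1, hab.symm⟩ ha.2⟩
  have hVW : Reach T (C0 \ {c}) v w1 := by
    by_cases hvw : v = w1
    · subst hvw; exact Reach.refl
    · obtain ⟨c', h1, h2, h3, h4⟩ := nbr hconn hv hw1 (Ne.symm hvw)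
      have hc'c : c' ≠ c := by
        intro h; subst h
        exact hw1D (hreach_to_D hcD h4)
      have h5 := h4.restrict
      have hZsub : {z | z ∈ C0 \ {v} ∧ Reach T (C0 \ {v}) z w1} ⊆ C0 \ {c} := by
        rintro z ⟨hz1, hz2⟩
        refine ⟨hz1.1, ?_⟩
        intro hzc
        rw [Set.mem_singleton_iff] at hzc
        exact hw1D (hreach_to_D hcD (hzc ▸ hz2))
      have h6 : Reach T (C0 \ {c}) c' w1 := h5.mono hZsub
      exact Relation.ReflTransGen.head
        ⟨⟨hv, by simpa using Ne.symm hcv⟩, ⟨h2, by simpa using hc'c⟩, h1⟩ h6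
  have hWc : WSet T C0 w1 c = D \ {c} := by
    apply Set.Subset.antisymm
    · rintro u ⟨huC0, huc, hur⟩
      refine ⟨?_, by simpa using huc⟩
      by_contra hnK
      apply hur
      by_cases huv : u = v
      · subst huv; exact hVW
      · obtain ⟨c'', h1, h2, h3, h4⟩ := nbr hconn hv huC0 huv
        have hc''c : c'' ≠ c := by
          intro h; subst h
          exact hnK (hreach_to_D hcD h4)
        have h5 := h4.restrict
        have hZsub : {z | z ∈ C0 \ {v} ∧ Reach T (C0 \ {v}) z u} ⊆ C0 \ {c} := by
          rintro z ⟨hz1, hz2⟩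
          refine ⟨hz1.1, ?_⟩
          intro hzc
          rw [Set.mem_singleton_iff] at hzc
          exact hnK (hreach_to_D hcD (hzc ▸ hz2))
        have h6 : Reach T (C0 \ {c}) c'' u := h5.mono hZsub
        have h8 : Reach T (C0 \ {c}) u v :=
          h6.symm.tail ⟨⟨h2, by simpa using hc''c⟩, ⟨hv, by simpa using Ne.symm hcv⟩, h1.symm⟩
        exact h8.trans hVW
    · rintro u ⟨huD, huc⟩
      have hu' := delComp_subset hD huD
      refine ⟨hu'.1, by simpa using huc, ?_⟩
      intro hr
      obtain ⟨z, hzD, hzc, hvz⟩ := cross hKcl hw1D huD hr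
      have hzm := delComp_subset hD hzD
      have hcm := delComp_subset hD hcD
      have hrzc : Reach T (C0 \ {v}) z c := by
        rw [hDK] at hzD hcD
        exact Reach.trans hzD.2 hcD.2.symm
      exact two_nbr hT hvz hvc hzc (by simp) hzm hcm hrzc
  have hcWv : D ⊆ WSet T C0 w1 v := delComp_subset_WSet hD hw1D
  have h1 : (WSet T C0 w1 c).ncard = D.ncard - 1 := by
    rw [hWc, Set.ncard_diff_singleton_of_mem hcD]
  have h2 : D.ncard ≤ (WSet T C0 w1 v).ncard := Set.ncard_le_ncard hcWv (Set.toFinite _)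
  have h3 := hmin c hcC0 (by omega)
  omega

end St13

namespace St13

variable {V : Type*}

lemma core [Fintype V] {T : SimpleGraph V} (hT : T.IsAcyclic) {C0 : Set V}
    (hconn : ∀ u ∈ C0, ∀ u' ∈ C0, Reach T C0 u u')
    {w1 : V} (hw1 : w1 ∈ C0) (m : ℕ) (hm : m + 1 ≤ C0.ncard) :
    ∃ v ∈ C0, ∃ (p' : ℕ) (C' : Fin p' → Set V),
      (∀ j, DelComp T C0 v (C' j)) ∧ Function.Injective C' ∧
      w1 ∉ ⋃ j, C' j ∧ m ≤ (⋃ j, C' j).ncard ∧ (⋃ j, C' j).ncard ≤ 2 * m - 1 := by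
  classical
  have hWw1 : WSet T C0 w1 w1 = C0 \ {w1} := by
    ext u
    constructor
    · rintro ⟨h1, h2, _⟩; exact ⟨h1, by simpa using h2⟩
    · rintro ⟨h1, h2⟩
      have h2' : u ≠ w1 := by simpa using h2
      refine ⟨h1, h2', ?_⟩
      intro hr
      rcases hr.mem' with rfl | ⟨_, hmem⟩
      · exact h2' rfl
      · simpa using hmem.2
  have hw1m : m ≤ (WSet T C0 w1 w1).ncard := by
    rw [hWw1, Set.ncard_diff_singleton_of_mem hw1]
    omega
  set Vs : Finset V := (Set.toFinite {u | u ∈ C0 ∧ m ≤ (WSet T C0 w1 u).ncard}).toFinset with hVs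
  have hw1Vs : w1 ∈ Vs := by
    rw [hVs, Set.Finite.mem_toFinset]
    exact ⟨hw1, hw1m⟩
  obtain ⟨v, hvVs, hvmin⟩ :=
    Finset.exists_min_image Vs (fun u => (WSet T C0 w1 u).ncard) ⟨w1, hw1Vs⟩
  rw [hVs, Set.Finite.mem_toFinset] at hvVs
  obtain ⟨hvC0, hvm⟩ := hvVs
  have hmin : ∀ u ∈ C0, m ≤ (WSet T C0 w1 u).ncard →
      (WSet T C0 w1 v).ncard ≤ (WSet T C0 w1 u).ncard := by
    intro u hu hmu
    exact hvmin u (by rw [hVs, Set.Finite.mem_toFinset]; exact ⟨hu, hmu⟩)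
  set 𝒞 : Finset (Set V) := (Set.toFinite {D | DelComp T C0 v D ∧ w1 ∉ D}).toFinset with h𝒞def
  have h𝒞 : ∀ D ∈ 𝒞, DelComp T C0 v D ∧ w1 ∉ D := by
    intro D hD; rw [h𝒞def, Set.Finite.mem_toFinset] at hD; exact hD
  have hWv : WSet T C0 w1 v = ⋃ D ∈ 𝒞, D := by
    ext u
    constructor
    · rintro ⟨h1, h2, h3⟩
      obtain ⟨D, hD, huD⟩ := delComp_mem (T := T) ⟨h1, by simpa using h2⟩
      have hw1D : w1 ∉ D := by
        intro hw1D'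
        apply h3
        rw [delComp_eq hD huD] at hw1D'
        exact hw1D'.2.symm
      have hD𝒞 : D ∈ 𝒞 := by
        rw [h𝒞def, Set.Finite.mem_toFinset]
        exact ⟨hD, hw1D⟩
      exact Set.mem_biUnion hD𝒞 huD
    · intro hu
      rw [Set.mem_iUnion₂] at hu
      obtain ⟨D, hD, huD⟩ := hu
      obtain ⟨hDc, hw1D⟩ := h𝒞 D hD
      exact delComp_subset_WSet hDc hw1D huD
  have hdisj : ∀ D ∈ 𝒞, ∀ D' ∈ 𝒞, D ≠ D' → Disjoint D D' := by
    intro D hD D' hD' hne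
    exact delComp_disjoint (h𝒞 D hD).1 (h𝒞 D' hD').1 hne
  have hsum : (WSet T C0 w1 v).ncard = ∑ D ∈ 𝒞, D.ncard := by
    rw [hWv, sumcard 𝒞 hdisj]
  have hsz : ∀ D ∈ 𝒞, D.ncard ≤ m := by
    intro D hD
    exact key hT hconn hw1 hvC0 hmin (h𝒞 D hD).1 (h𝒞 D hD).2
  obtain ⟨t, hts, h1, h2⟩ := greedy m 𝒞 hsz (by omega)
  have hdisjt : ∀ D ∈ t, ∀ D' ∈ t, D ≠ D' → Disjoint D D' :=
    fun D hD D' hD' hne => hdisj D (hts hD) D' (hts hD') hne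
  have hU : (⋃ j, ((t.equivFin.symm j : ↥t) : Set V)) = ⋃ D ∈ t, D := by
    ext u
    simp only [Set.mem_iUnion]
    constructor
    · rintro ⟨j, hj⟩
      exact ⟨_, (t.equivFin.symm j).2, hj⟩
    · rintro ⟨D, hD, huD⟩
      refine ⟨t.equivFin ⟨D, hD⟩, ?_⟩
      rw [Equiv.symm_apply_apply]
      exact huD
  refine ⟨v, hvC0, t.card, fun j => ((t.equivFin.symm j : ↥t) : Set V),
    fun j => (h𝒞 _ (hts (t.equivFin.symm j).2)).1,
    fun j j' h => t.equivFin.symm.injective (Subtype.ext h), ?_, ?_, ?_⟩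
  · rw [hU]
    intro hw1U
    simp only [Set.mem_iUnion] at hw1U
    obtain ⟨D, hD, hw1D⟩ := hw1U
    exact (h𝒞 D (hts hD)).2 hw1D
  · rw [hU, sumcard t hdisjt]
    exact h1
  · rw [hU, sumcard t hdisjt]
    exact h2

end St13

end

/-- The collection `C 0, …, C (t-1)` is `(x,y)`-feasible: `x ≤ |C_{[t]}| + 1 ≤ x + y − 2`. -/
def FeasibleColl {V : Type*} (x y : ℕ) (t : ℕ) (C : Fin t → Set V) : Prop :=
  x ≤ (⋃ i, C i).ncard + 1 ∧ (⋃ i, C i).ncard + 1 ≤ x + y - 2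

/-- The collection `C 0, …, C (t-1)` is `(x,y)`-critical: `t ≥ 2`,
`x + y − 2 ≤ |C_{[t]}| ≤ 2x − 3`, and `|C_I| ≤ x − 2` for every proper `I ⊊ {0,…,t-1}`. -/
def CriticalColl {V : Type*} (x y : ℕ) (t : ℕ) (C : Fin t → Set V) : Prop :=
  2 ≤ t ∧ x + y - 2 ≤ (⋃ i, C i).ncard ∧ (⋃ i, C i).ncard ≤ 2 * x - 3 ∧
    ∀ I : Finset (Fin t), I ≠ Finset.univ → (⋃ i ∈ I, C i).ncard ≤ x - 2

/-- Claim about splitting an `(x,y)`-critical collection in a tree `T'₀` (for `x ≤ 4y`):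
there are a vertex `w' ∈ C_1` and a collection of `w'`-components of the forest induced on
`C_1`, avoiding `w_1`, satisfying size condition (a) or (b). -/
theorem statement13 (x y : ℕ) (hy : 2 ≤ y) (hyx : y < x) (hx4 : x ≤ 4 * y)
    (V : Type) [Fintype V] (T : SimpleGraph V) (hT : T.IsTree)
    (w : V) (p : ℕ) (hp : 0 < p) (C : Fin p → Set V)
    (hcomp : ∀ i, DelComp T Set.univ w (C i))
    (hinj : Function.Injective C)
    (hall : ∀ D : Set V, DelComp T Set.univ w D → ∃ i, D = C i)
    (hmono : ∀ i j : Fin p, i ≤ j → (C i).ncard ≤ (C j).ncard)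
    (hcrit : CriticalColl x y p C)
    (w1 : V) (hw1 : w1 ∈ C ⟨0, hp⟩) (hadj : T.Adj w w1) :
    ∃ w' ∈ C ⟨0, hp⟩, ∃ (p' : ℕ) (C' : Fin p' → Set V),
      (∀ j, DelComp T (C ⟨0, hp⟩) w' (C' j)) ∧ Function.Injective C' ∧
      w1 ∉ ⋃ j, C' j ∧
      ((x ≤ Fintype.card V - (⋃ j, C' j).ncard - 1 ∧
          Fintype.card V - (⋃ j, C' j).ncard - 1 ≤ x + y - 2) ∨
        (x ≤ (⋃ i ∈ {i : Fin p | i ≠ ⟨0, hp⟩}, C i).ncard + 2 + (⋃ j, C' j).ncard ∧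
          (⋃ i ∈ {i : Fin p | i ≠ ⟨0, hp⟩}, C i).ncard + 2 + (⋃ j, C' j).ncard ≤
            x + y - 2)) := by
  classical
  obtain ⟨hp2, hSlow, hShigh, hIcrit⟩ := hcrit
  have h1lt : (1 : ℕ) < p := hp2
  -- basic structure of the components of T - w
  have hUnion : (⋃ i, C i) = Set.univ \ {w} := by
    apply Set.Subset.antisymm
    · exact Set.iUnion_subset (fun i => St13.delComp_subset (hcomp i))
    · intro u hu
      obtain ⟨D, hD, huD⟩ := St13.delComp_mem (T := T) hu
      obtain ⟨i, rfl⟩ := hall D hD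
      exact Set.mem_iUnion.mpr ⟨i, huD⟩
  have hdisjC : ∀ i j : Fin p, i ≠ j → Disjoint (C i) (C j) := by
    intro i j hij
    exact St13.delComp_disjoint (hcomp i) (hcomp j) (fun h => hij (hinj h))
  set S := (⋃ i, C i).ncard with hSdef
  set R := (⋃ i ∈ {i : Fin p | i ≠ ⟨0, hp⟩}, C i).ncard with hRdef
  set n0 := (C ⟨0, hp⟩).ncard with hn0def
  have hcardV : Fintype.card V = S + 1 := by
    rw [hSdef, hUnion, Set.ncard_diff (Set.subset_univ _) (Set.toFinite _),
      Set.ncard_univ, Nat.card_eq_fintype_card, Set.ncard_singleton]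
    have : 1 ≤ Fintype.card V := Fintype.card_pos_iff.mpr ⟨w⟩
    omega
  have hsplit : (⋃ i, C i) = C ⟨0, hp⟩ ∪ ⋃ i ∈ {i : Fin p | i ≠ ⟨0, hp⟩}, C i := by
    ext u
    simp only [Set.mem_iUnion, Set.mem_union, Set.mem_setOf_eq]
    constructor
    · rintro ⟨i, hi⟩
      by_cases h : i = ⟨0, hp⟩
      · subst h; exact Or.inl hi
      · exact Or.inr ⟨i, h, hi⟩
    · rintro (h | ⟨i, _, hi⟩)
      · exact ⟨⟨0, hp⟩, h⟩
      · exact ⟨i, hi⟩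
  have hdisj0 : Disjoint (C ⟨0, hp⟩) (⋃ i ∈ {i : Fin p | i ≠ ⟨0, hp⟩}, C i) := by
    apply Set.disjoint_iUnion_right.mpr
    intro i
    apply Set.disjoint_iUnion_right.mpr
    intro hi
    exact hdisjC ⟨0, hp⟩ i (fun h => hi h.symm)
  have hSR : S = n0 + R := by
    rw [hSdef, hsplit, Set.ncard_union_eq hdisj0 (Set.toFinite _) (Set.toFinite _)]
  have hmono01 : (C ⟨0, hp⟩).ncard ≤ (C ⟨1, h1lt⟩).ncard :=
    hmono _ _ (Fin.mk_le_mk.mpr (Nat.zero_le 1))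
  have hsub1 : C ⟨1, h1lt⟩ ⊆ ⋃ i ∈ {i : Fin p | i ≠ ⟨0, hp⟩}, C i := by
    intro u hu
    simp only [Set.mem_iUnion, Set.mem_setOf_eq]
    exact ⟨⟨1, h1lt⟩, by simp [Fin.ext_iff], hu⟩
  have hn0R : n0 ≤ R := le_trans hmono01 (Set.ncard_le_ncard hsub1 (Set.toFinite _))
  have hn0x : n0 ≤ x - 2 := by
    have hne : ({⟨0, hp⟩} : Finset (Fin p)) ≠ Finset.univ := by
      intro hEq
      have := Finset.eq_univ_iff_forall.mp hEq ⟨1, h1lt⟩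
      simp [Fin.ext_iff] at this
    have h := hIcrit {⟨0, hp⟩} hne
    have hEq : (⋃ i ∈ ({⟨0, hp⟩} : Finset (Fin p)), C i) = C ⟨0, hp⟩ := by simp
    rwa [hEq] at h
  have hRx : R ≤ x - 2 := by
    have hne : ({⟨0, hp⟩}ᶜ : Finset (Fin p)) ≠ Finset.univ := by
      intro hEq
      have := Finset.eq_univ_iff_forall.mp hEq ⟨0, hp⟩
      simp at this
    have h := hIcrit ({⟨0, hp⟩}ᶜ) hne
    have hEq : (⋃ i ∈ (({⟨0, hp⟩}ᶜ : Finset (Fin p)) : Finset (Fin p)), C i)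
        = ⋃ i ∈ {i : Fin p | i ≠ ⟨0, hp⟩}, C i := by
      ext u
      simp [Finset.mem_compl]
    rwa [hEq] at h
  have hn0pos : 1 ≤ n0 := by
    rw [hn0def]
    exact (Set.ncard_pos (Set.toFinite _)).mpr ⟨w1, hw1⟩
  set a := S - (x + y - 2) with hadef
  set b := (x - 2) - R with hbdef
  set m := min a b with hmdef
  -- connectivity of C ⟨0, hp⟩
  obtain ⟨c₀, hc₀⟩ := hcomp ⟨0, hp⟩
  have hconn : ∀ u ∈ C ⟨0, hp⟩, ∀ u' ∈ C ⟨0, hp⟩, St13.Reach T (C ⟨0, hp⟩) u u' := by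
    intro u hu u' hu'
    rw [hc₀] at hu hu'
    obtain ⟨au, hau, rfl⟩ := hu
    obtain ⟨au', hau', rfl⟩ := hu'
    rw [SimpleGraph.ConnectedComponent.mem_supp_iff] at hau hau'
    have hreach : (T.induce (Set.univ \ {w})).Reachable au au' := by
      rw [← SimpleGraph.ConnectedComponent.eq, hau, hau']
    have h1 : St13.Reach T (Set.univ \ {w}) ↑au ↑au' := St13.reach_of_reachable hreach
    refine h1.restrict.mono ?_
    rintro z ⟨hz1, hz2⟩
    rw [hc₀]
    rcases St13.Reach.mem' hz2 with rfl | ⟨hzS, hau'S⟩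
    · exact ⟨au', by rw [SimpleGraph.ConnectedComponent.mem_supp_iff, hau'], rfl⟩
    · refine ⟨⟨z, hzS⟩, ?_, rfl⟩
      rw [SimpleGraph.ConnectedComponent.mem_supp_iff, ← hau',
        SimpleGraph.ConnectedComponent.eq]
      exact St13.reachable_of_reach hz2 hzS au'.2
  obtain ⟨v, hvC0, p', C', hdel, hinj', hw1U, hsl, hsu⟩ :=
    St13.core hT.IsAcyclic hconn hw1 m (by omega)
  refine ⟨v, hvC0, p', C', hdel, hinj', hw1U, ?_⟩
  set s := (⋃ j, C' j).ncard with hsdef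
  by_cases hab : a ≤ b
  · exact Or.inl (by omega)
  · exact Or.inr (by omega)
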